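/- arXiv:2505.15432 — 2 statements merged into one kernel-verified Lean document; each statement's English description precedes it below -/
import Mathlib

section
/- Let ℓ = ℓ1 ℓ2 be a factorization of a Lyndon word ℓ with ℓ1 and ℓ2 both Lyndon and |ℓ1| > 1. Then ℓ2 equals the longest proper Lyndon suffix ℓ^r of ℓ if and only if ℓ1^r ≥ ℓ2, where ℓ1^r is the longest proper Lyndon suffix of ℓ1. -/
/- Words over a linearly ordered alphabet `I` are lists, compared by the
lexicographic order of Lean's `LinearOrder (List I)` instance, in which a word
is smaller than any word of which it is a proper prefix. -/

variable {I : Type*} [LinearOrder I]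

/-- A nonempty word is *Lyndon* if it is lexicographically smaller than
every proper nonempty suffix of itself. -/
def IsLyndon (w : List I) : Prop :=
  w ≠ [] ∧ ∀ i, 0 < i → i < w.length → w < w.drop i

/-- `r` is the longest proper suffix of `l` that is Lyndon
(the right factor `l^r` of the costandard factorization). -/
def LongestLyndonSuffix (l r : List I) : Prop :=
  r <:+ l ∧ r.length < l.length ∧ IsLyndon r ∧
    ∀ r', r' <:+ l → r'.length < l.length → IsLyndon r' → r'.length ≤ r.length

/-- `p` is the longest proper prefix of `l` that is Lyndon
(the left factor `l^{ls}` of the standard factorization). -/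
def LongestLyndonPrefix (l p : List I) : Prop :=
  p <+: l ∧ p.length < l.length ∧ IsLyndon p ∧
    ∀ p', p' <+: l → p'.length < l.length → IsLyndon p' → p'.length ≤ p.length

/-- `fs` is the canonical factorization of `w`: a nonempty, lexicographically
nonincreasing list of Lyndon words whose concatenation is `w`. -/
def IsCanonicalFactorization (w : List I) (fs : List (List I)) : Prop :=
  w = fs.flatten ∧ fs ≠ [] ∧ (∀ f ∈ fs, IsLyndon f) ∧ fs.Chain' (· ≥ ·)
private lemma lex_append_left {x y : List I} (h : x < y) (u : List I) : u ++ x < u ++ y := by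
  induction u with
  | nil => exact h
  | cons a u ih => exact List.Lex.cons ih

private lemma lt_append_right' (u x : List I) (hx : x ≠ []) : u < u ++ x := by
  induction u with
  | nil =>
    cases x with
    | nil => exact absurd rfl hx
    | cons a l => exact List.Lex.nil
  | cons a u ih => exact List.Lex.cons ih

private lemma le_of_prefix' {u v : List I} (h : u <+: v) : u ≤ v := by
  obtain ⟨w, rfl⟩ := h
  rcases eq_or_ne w [] with rfl | hw
  · simp
  · exact le_of_lt (lt_append_right' u w hw)

private lemma lt_append_append : ∀ {u v : List I}, u < v → ¬ u <+: v →
    ∀ x y : List I, u ++ x < v ++ y := by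
  intro u v h
  have h' : List.Lex (· < ·) u v := h
  clear h
  induction h' with
  | nil => exact fun hp => absurd (List.nil_prefix) hp
  | @rel a as b bs hab => exact fun _ x y => List.Lex.rel hab
  | @cons a as bs h ih =>
    intro hp x y
    exact List.Lex.cons (ih (fun hpre => hp (List.cons_prefix_cons.mpr ⟨rfl, hpre⟩)) x y)

private lemma lt_of_append_lt {t w : List I} (h : t ++ w < w) : t < w := by
  rcases lt_trichotomy t w with h' | rfl | h'
  · exact h'
  · exact absurd h (not_lt.mpr (le_of_prefix' ⟨_, rfl⟩))
  · by_cases hp : w <+: t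
    · obtain ⟨z, rfl⟩ := hp
      have : w ≤ (w ++ z) ++ w := le_of_prefix' ⟨z ++ w, by simp⟩
      exact absurd h (not_lt.mpr this)
    · have := lt_append_append h' hp [] w
      simp only [List.append_nil] at this
      exact absurd h (not_lt.mpr this.le)

private lemma suffix_drop_eq {u v : List I} (h : u <:+ v) :
    v.drop (v.length - u.length) = u := by
  obtain ⟨w, rfl⟩ := h
  have : (w ++ u).length - u.length = w.length := by simp
  rw [this, List.drop_left]

private lemma suffix_of_suffix_le {u v w : List I} (hu : u <:+ w) (hv : v <:+ w)
    (h : u.length ≤ v.length) : u <:+ v :=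
  List.suffix_of_suffix_length_le hu hv h

/-- The longest Lyndon proper suffix is the smallest nonempty proper suffix. -/
private lemma longest_lyndon_suffix_min {ℓ1 r1 : List I} (hr1 : LongestLyndonSuffix ℓ1 r1) :
    ∀ n, ∀ t : List I, t.length ≤ n → t <:+ ℓ1 → t ≠ [] → t.length < ℓ1.length → r1 ≤ t := by
  intro n
  induction n with
  | zero =>
    intro t htn _ htne _
    exact absurd (List.length_eq_zero_iff.mp (Nat.le_zero.mp htn)) htne
  | succ n ih =>
    intro t htn hs htne htlt
    by_cases hL : IsLyndon t
    · have hlen := hr1.2.2.2 t hs htlt hL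
      have hsuf : t <:+ r1 := suffix_of_suffix_le hs hr1.1 hlen
      rcases eq_or_ne t r1 with rfl | hne
      · exact le_rfl
      · have htpos : 0 < t.length := List.length_pos_iff.mpr htne
        have hlt : t.length < r1.length :=
          lt_of_le_of_ne hlen (fun h => hne (hsuf.eq_of_length h))
        have h1 : r1 < r1.drop (r1.length - t.length) :=
          hr1.2.2.1.2 (r1.length - t.length) (by omega) (by omega)
        rw [suffix_drop_eq hsuf] at h1
        exact h1.le
    · unfold IsLyndon at hL
      push_neg at hL
      obtain ⟨i, hi0, hilen, hle⟩ := hL htne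
      have ht'len : (t.drop i).length = t.length - i := List.length_drop
      have ht'ne : t.drop i ≠ [] := by
        intro h; rw [h] at ht'len; simp at ht'len; omega
      have ht's : t.drop i <:+ ℓ1 := (List.drop_suffix i t).trans hs
      exact le_trans (ih (t.drop i) (by omega) ht's ht'ne (by omega)) hle

/-- Concatenation of Lyndon words u < v is Lyndon. -/
private lemma lyndon_append {u v : List I} (hu : IsLyndon u) (hv : IsLyndon v) (huv : u < v) :
    IsLyndon (u ++ v) := by
  have hune : u ≠ [] := hu.1
  have hvne : v ≠ [] := hv.1
  have hulen : 0 < u.length := List.length_pos_iff.mpr hune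
  have hvlen : 0 < v.length := List.length_pos_iff.mpr hvne
  have key : u ++ v < v := by
    by_cases hp : u <+: v
    · obtain ⟨w, rfl⟩ := hp
      have hwne : w ≠ [] := by
        rintro rfl
        rw [List.append_nil] at huv
        exact lt_irrefl u huv
      have h1 : u ++ w < (u ++ w).drop u.length :=
        hv.2 u.length hulen (by simp [List.length_append, List.length_pos_iff.mpr hwne])
      rw [List.drop_left] at h1
      exact lex_append_left h1 u
    · have := lt_append_append huv hp v []
      simpa using this
  refine ⟨by simp [hune], fun i hi0 hilen => ?_⟩
  rcases lt_trichotomy i u.length with h | rfl | h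
  · rw [List.drop_append_of_le_length h.le]
    have hut : u < u.drop i := hu.2 i hi0 h
    have htlen : (u.drop i).length < u.length := by rw [List.length_drop]; omega
    have hp : ¬ u <+: u.drop i := fun hp => absurd hp.length_le (by omega)
    exact lt_append_append hut hp v v
  · rwa [List.drop_left]
  · have hilen' : i - u.length < v.length := by
      rw [List.length_append] at hilen; omega
    have hd : (u ++ v).drop i = v.drop (i - u.length) := by
      rw [List.drop_append, List.drop_eq_nil_of_le h.le, List.nil_append]
    rw [hd]
    exact lt_trans key (hv.2 (i - u.length) (by omega) hilen')

/-- If `ℓ = ℓ1 ℓ2` with `ℓ, ℓ1, ℓ2` Lyndon and `|ℓ1| > 1`, then `ℓ2` equals the longest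
proper Lyndon suffix `ℓ^r` of `ℓ` if and only if `ℓ1^r ≥ ℓ2`. -/
theorem right_factor_iff (ℓ ℓ1 ℓ2 r r1 : List I)
    (hℓ : IsLyndon ℓ) (h1 : IsLyndon ℓ1) (h2 : IsLyndon ℓ2) (hsplit : ℓ = ℓ1 ++ ℓ2)
    (h1len : 1 < ℓ1.length)
    (hr : LongestLyndonSuffix ℓ r) (hr1 : LongestLyndonSuffix ℓ1 r1) :
    ℓ2 = r ↔ ℓ2 ≤ r1 := by
  have hℓ2ne : ℓ2 ≠ [] := h2.1
  have h2len : 0 < ℓ2.length := List.length_pos_iff.mpr hℓ2ne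
  have hr1ne : r1 ≠ [] := hr1.2.2.1.1
  have hr1len : 0 < r1.length := List.length_pos_iff.mpr hr1ne
  have hLlen : ℓ.length = ℓ1.length + ℓ2.length := by rw [hsplit, List.length_append]
  constructor
  · rintro rfl
    by_contra hlt
    push_neg at hlt
    have hLyn : IsLyndon (r1 ++ ℓ2) := lyndon_append hr1.2.2.1 h2 hlt
    have hsuf : r1 ++ ℓ2 <:+ ℓ := by
      obtain ⟨w, hw⟩ := hr1.1
      exact ⟨w, by rw [hsplit, ← hw, List.append_assoc]⟩
    have hr1lt : r1.length < ℓ1.length := hr1.2.1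
    have hlen : (r1 ++ ℓ2).length < ℓ.length := by
      rw [List.length_append]; omega
    have := hr.2.2.2 (r1 ++ ℓ2) hsuf hlen hLyn
    rw [List.length_append] at this
    omega
  · intro hle
    have hmax : ∀ s : List I, s <:+ ℓ → s.length < ℓ.length → IsLyndon s →
        s.length ≤ ℓ2.length := by
      intro s hs hslen hsL
      by_contra hgt
      push_neg at hgt
      set k := ℓ.length - s.length with hk
      have hk0 : 0 < k := by omega
      have hkl : k < ℓ1.length := by omega
      have hseq : ℓ.drop k = s := suffix_drop_eq hs
      have hdec : ℓ.drop k = ℓ1.drop k ++ ℓ2 := by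
        rw [hsplit, List.drop_append_of_le_length hkl.le]
      set m := ℓ1.drop k with hm
      have hmeq : s = m ++ ℓ2 := by rw [← hseq, hdec]
      have hmlen : m.length = ℓ1.length - k := List.length_drop
      have hmne : m ≠ [] := by
        intro h; rw [h] at hmlen; simp at hmlen; omega
      have hslt : m ++ ℓ2 < ℓ2 := by
        have h1' : s < s.drop m.length := by
          refine hsL.2 m.length (List.length_pos_iff.mpr hmne) ?_
          rw [hmeq, List.length_append]; omega
        rwa [hmeq, List.drop_left] at h1'
      have hmlt : m < ℓ2 := lt_of_append_lt hslt
      have hr1m : r1 ≤ m :=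
        longest_lyndon_suffix_min hr1 m.length m le_rfl (List.drop_suffix k ℓ1) hmne (by omega)
      exact absurd (lt_of_le_of_lt (hle.trans hr1m) hmlt) (lt_irrefl ℓ2)
    have h2suf : ℓ2 <:+ ℓ := ⟨ℓ1, hsplit.symm⟩
    have h2prop : ℓ2.length < ℓ.length := by omega
    have hlen1 : ℓ2.length ≤ r.length := hr.2.2.2 ℓ2 h2suf h2prop h2
    have hlen2 : r.length ≤ ℓ2.length := hmax r hr.1 hr.2.1 hr.2.2.1
    exact (suffix_of_suffix_le h2suf hr.1 hlen1).eq_of_length (le_antisymm hlen1 hlen2)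
end

section
/- Let u be a Lyndon word and write u = v w with w Lyndon and v nonempty, and let v = v1 v2 ... vN be the canonical factorization of v (each vi Lyndon, v1 ≥ v2 ≥ ... ≥ vN). Then every partial concatenation vN w, v_{N-1} vN w, ..., v1 v2 ... vN w is a Lyndon word. -/
/- Words over a linearly ordered alphabet `I` are lists, compared by the
lexicographic order of Lean's `LinearOrder (List I)` instance, in which a word
is smaller than any word of which it is a proper prefix. -/

variable {I : Type*} [LinearOrder I]

private lemma lex_append_of_not_prefix {x y : List I} (h : List.Lex (· < ·) x y)
    (hnp : ¬ x <+: y) (s t : List I) : List.Lex (· < ·) (x ++ s) (y ++ t) := by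
  induction h with
  | nil => exact absurd (List.nil_prefix) hnp
  | rel h => exact List.Lex.rel h
  | @cons a as bs h ih =>
      refine List.Lex.cons (ih ?_)
      intro hp
      exact hnp (List.cons_prefix_cons.mpr ⟨rfl, hp⟩)

private lemma lex_append_self (p : List I) {t : List I} (ht : t ≠ []) :
    List.Lex (· < ·) p (p ++ t) := by
  induction p with
  | nil =>
      cases t with
      | nil => exact absurd rfl ht
      | cons b bs => exact List.Lex.nil
  | cons a p ih => exact List.Lex.cons ih

private lemma prefix_le {p l : List I} (h : p <+: l) : p ≤ l := by
  obtain ⟨t, rfl⟩ := h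
  rcases eq_or_ne t [] with rfl | ht
  · simp
  · exact le_of_lt (lex_append_self p ht)

private lemma append_lt_right {a b : List I} (ha : IsLyndon a) (hb : IsLyndon b)
    (hab : a < b) : a ++ b < b := by
  by_cases hp : a <+: b
  · obtain ⟨c, rfl⟩ := hp
    have hc : c ≠ [] := by
      rintro rfl
      rw [List.append_nil] at hab
      exact lt_irrefl _ hab
    have hlt : a ++ c < c := by
      have := hb.2 a.length (List.length_pos_iff.mpr ha.1)
        (by simp [List.length_pos_iff.mpr hc])
      rwa [List.drop_left] at this
    exact List.Lex.append_left _ hlt a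
  · have := lex_append_of_not_prefix hab hp b []
    rwa [List.append_nil] at this

private lemma isLyndon_append {a b : List I} (ha : IsLyndon a) (hb : IsLyndon b)
    (hab : a < b) : IsLyndon (a ++ b) := by
  refine ⟨by simp [ha.1], ?_⟩
  intro i hi hilen
  rcases lt_trichotomy i a.length with h | h | h
  · rw [List.drop_append_of_le_length h.le]
    have h1 : a < a.drop i := ha.2 i hi h
    have hnp : ¬ a <+: a.drop i := by
      intro hp
      have := hp.length_le
      rw [List.length_drop] at this
      omega
    exact lex_append_of_not_prefix h1 hnp b b
  · rw [h, List.drop_left]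
    exact append_lt_right ha hb hab
  · have hdrop : (a ++ b).drop i = b.drop (i - a.length) := by
      have : i = a.length + (i - a.length) := by omega
      rw [this, List.drop_length_add_append]
      congr 1
      omega
    rw [hdrop]
    have hlen : i - a.length < b.length := by
      rw [List.length_append] at hilen; omega
    have h2 : b < b.drop (i - a.length) := hb.2 _ (by omega) hlen
    exact lt_trans (append_lt_right ha hb hab) h2

/-- If a Lyndon word `u` splits as `u = v w` with `w` Lyndon and `v` nonempty, and
`v = v1 … vN` is the canonical factorization of `v`, then every partial concatenation
`v_{N-k+1} … vN w` (for `1 ≤ k ≤ N`) is Lyndon. -/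
theorem partial_left_concat_lyndon (u v w : List I)
    (hu : IsLyndon u) (hw : IsLyndon w) (hv : v ≠ []) (hsplit : u = v ++ w)
    (fs : List (List I)) (hfac : IsCanonicalFactorization v fs) :
    ∀ k, 1 ≤ k → k ≤ fs.length →
      IsLyndon ((fs.drop (fs.length - k)).flatten ++ w) := by
  obtain ⟨hflat, hne, hlyn, hchain⟩ := hfac
  have key : ∀ k, k ≤ fs.length → IsLyndon ((fs.drop (fs.length - k)).flatten ++ w) := by
    intro k
    induction k with
    | zero =>
        intro _
        simpa [List.drop_length] using hw
    | succ k ih =>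
        intro hk
        have ihk : IsLyndon ((fs.drop (fs.length - k)).flatten ++ w) := ih (by omega)
        have hmlt : fs.length - (k + 1) < fs.length := by omega
        have hdropm : fs.drop (fs.length - (k + 1))
            = fs[fs.length - (k + 1)] :: fs.drop (fs.length - k) := by
          rw [List.drop_eq_getElem_cons hmlt]
          have h1 : fs.length - (k + 1) + 1 = fs.length - k := by omega
          rw [h1]
        rw [hdropm]
        have hgoal : (fs[fs.length - (k + 1)] :: fs.drop (fs.length - k)).flatten ++ w
            = fs[fs.length - (k + 1)] ++ ((fs.drop (fs.length - k)).flatten ++ w) := by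
          simp [List.append_assoc]
        rw [hgoal]
        have halyn : IsLyndon fs[fs.length - (k + 1)] := hlyn _ (List.getElem_mem hmlt)
        refine isLyndon_append halyn ihk ?_
        obtain ⟨f, rest, rfl⟩ : ∃ f rest, fs = f :: rest := by
          cases fs with
          | nil => exact absurd rfl hne
          | cons f rest => exact ⟨f, rest, rfl⟩
        have hpair : List.Pairwise (· ≥ ·) (f :: rest) := List.isChain_iff_pairwise.mp hchain
        have hale : (f :: rest)[(f :: rest).length - (k + 1)] ≤ f := by
          rw [List.getElem_cons]
          split
          · exact le_refl f
          · exact (List.pairwise_cons.mp hpair).1 _ (List.getElem_mem _)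
        have hfu : f ≤ u := by
          refine prefix_le ⟨rest.flatten ++ w, ?_⟩
          rw [hsplit, hflat]
          simp
        have hub : u < (((f :: rest) : List (List I)).drop
            ((f :: rest).length - k)).flatten ++ w := by
          obtain ⟨n', hn'⟩ : ∃ n', (f :: rest).length - k = n' + 1 := by
            refine ⟨(f :: rest).length - k - 1, ?_⟩
            simp only [List.length_cons] at hk ⊢
            omega
          rw [hn']
          set b := (((f :: rest) : List (List I)).drop (n' + 1)).flatten ++ w with hb
          set p := (((f :: rest) : List (List I)).take (n' + 1)).flatten with hp
          have hpu : u = p ++ b := by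
            rw [hsplit, hflat, hb, hp, ← List.append_assoc, ← List.flatten_append,
              List.take_append_drop]
          have hplen : 0 < p.length := by
            rw [hp, List.take_succ_cons, List.flatten_cons, List.length_append]
            have := List.length_pos_iff.mpr (hlyn f (List.mem_cons_self (a := f) (l := rest))).1
            omega
          have hwlen : 0 < w.length := List.length_pos_iff.mpr hw.1
          have hulen : p.length < u.length := by
            rw [hpu, List.length_append, hb, List.length_append]
            omega
          have hlt := hu.2 p.length hplen hulen
          rw [hpu, List.drop_left] at hlt
          rw [hpu]
          exact hlt
        calc ((f :: rest) : List (List I))[(f :: rest).length - (k + 1)] ≤ f := hale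
          _ ≤ u := hfu
          _ < _ := hub
  intro k _ hk2
  exact key k hk2
end
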